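/- For every integer n ≥ 2, the polynomial f_n(w) = ∑_{k=1}^{n-1} w^k / k (the (n-1)-th partial sum of the Taylor series of -log(1-w)) has no complex roots in the closed unit disk { w ∈ ℂ : |w| ≤ 1 } other than w = 0. -/

import Mathlib

open Finset

-- Key algebraic identity: (1-w) * f_n(w) for n = m+3
lemma key_identity (m : ℕ) (w : ℂ) :
    (1 - w) * ∑ k ∈ Icc 1 (m + 2), w ^ k / (k : ℂ) =
      w - w ^ 2 / 2 - (∑ k ∈ Icc 3 (m + 2), w ^ k / ((k : ℂ) * ((k : ℂ) - 1)))
        - w ^ (m + 3) / ((m : ℂ) + 2) := by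
  induction m with
  | zero =>
      have h1 : Icc 1 2 = ({1, 2} : Finset ℕ) := by decide
      have h2 : Icc 3 2 = (∅ : Finset ℕ) := by decide
      rw [h1, h2]
      simp
      ring
  | succ m ih =>
      have e1 : ∑ k ∈ Icc 1 (m + 1 + 2), w ^ k / (k : ℂ) =
          (∑ k ∈ Icc 1 (m + 2), w ^ k / (k : ℂ)) + w ^ (m + 3) / ((m : ℂ) + 3) := by
        have := Finset.sum_Icc_succ_top (a := 1) (b := m + 2)
          (f := fun k => w ^ k / (k : ℂ)) (by omega)
        rw [show m + 1 + 2 = m + 2 + 1 by ring, this]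
        push_cast; ring_nf
      have e2 : ∑ k ∈ Icc 3 (m + 1 + 2), w ^ k / ((k : ℂ) * ((k : ℂ) - 1)) =
          (∑ k ∈ Icc 3 (m + 2), w ^ k / ((k : ℂ) * ((k : ℂ) - 1)))
            + w ^ (m + 3) / (((m : ℂ) + 3) * ((m : ℂ) + 2)) := by
        have := Finset.sum_Icc_succ_top (a := 3) (b := m + 2)
          (f := fun k => w ^ k / ((k : ℂ) * ((k : ℂ) - 1))) (by omega)
        rw [show m + 1 + 2 = m + 2 + 1 by ring, this]
        push_cast; ring_nf
      rw [e1, e2, mul_add, ih]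
      have hm2 : ((m : ℂ) + 2) ≠ 0 := by
        intro hc
        have : (m : ℂ) = -2 := by linear_combination hc
        have := congrArg Complex.re this
        simp at this
        nlinarith [Nat.cast_nonneg (α := ℝ) m]
      have hm3 : ((m : ℂ) + 3) ≠ 0 := by
        intro hc
        have : (m : ℂ) = -3 := by linear_combination hc
        have := congrArg Complex.re this
        simp at this
        nlinarith [Nat.cast_nonneg (α := ℝ) m]
      have hm3' : ((m : ℂ) + 1 + 2) ≠ 0 := by
        rw [show (m:ℂ) + 1 + 2 = (m:ℂ) + 3 by ring]; exact hm3
      push_cast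
      field_simp [hm2, hm3, hm3']
      ring

-- Real bound: tail coefficients sum to at most x^3/2 for 0 ≤ x ≤ 1
lemma tail_bound (m : ℕ) (x : ℝ) (hx0 : 0 ≤ x) (hx1 : x ≤ 1) :
    (∑ k ∈ Icc 3 (m + 2), x ^ k / ((k : ℝ) * ((k : ℝ) - 1))) + x ^ (m + 3) / ((m : ℝ) + 2)
      ≤ x ^ 3 / 2 := by
  induction m with
  | zero =>
      have h2 : Icc 3 2 = (∅ : Finset ℕ) := by decide
      rw [h2]
      simp
  | succ m ih =>
      have e2 : ∑ k ∈ Icc 3 (m + 1 + 2), x ^ k / ((k : ℝ) * ((k : ℝ) - 1)) =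
          (∑ k ∈ Icc 3 (m + 2), x ^ k / ((k : ℝ) * ((k : ℝ) - 1)))
            + x ^ (m + 3) / (((m : ℝ) + 3) * ((m : ℝ) + 2)) := by
        have := Finset.sum_Icc_succ_top (a := 3) (b := m + 2)
          (f := fun k => x ^ k / ((k : ℝ) * ((k : ℝ) - 1))) (by omega)
        rw [show m + 1 + 2 = m + 2 + 1 by ring, this]
        push_cast; ring_nf
      rw [e2]
      have hm2 : (0:ℝ) < (m : ℝ) + 2 := by positivity
      have hm3 : (0:ℝ) < (m : ℝ) + 3 := by positivity
      have hp : x ^ (m + 4) ≤ x ^ (m + 3) := by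
        calc x ^ (m + 4) = x ^ (m + 3) * x := by ring
        _ ≤ x ^ (m + 3) * 1 := by
            apply mul_le_mul_of_nonneg_left hx1 (pow_nonneg hx0 _)
        _ = x ^ (m + 3) := by ring
      have key : x ^ (m + 3) / (((m : ℝ) + 3) * ((m : ℝ) + 2)) + x ^ (m + 1 + 3) / ((m : ℝ) + 1 + 2)
          ≤ x ^ (m + 3) / ((m : ℝ) + 2) := by
        rw [show m + 1 + 3 = m + 4 by ring, show (m:ℝ) + 1 + 2 = (m:ℝ) + 3 by ring]
        have h1 : x ^ (m + 4) / ((m:ℝ) + 3) ≤ x ^ (m + 3) / ((m:ℝ) + 3) := by gcongr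
        have h2 : x ^ (m + 3) / (((m:ℝ) + 3) * ((m:ℝ) + 2)) + x ^ (m + 3) / ((m:ℝ) + 3)
            = x ^ (m + 3) / ((m:ℝ) + 2) := by
          field_simp
          ring
        linarith
      push_cast
      linarith

theorem statement19 (n : ℕ) (hn : 2 ≤ n) (w : ℂ) (hw : ‖w‖ ≤ 1)
    (h : ∑ k ∈ Finset.Icc 1 (n - 1), w ^ k / (k : ℂ) = 0) : w = 0 := by
  obtain ⟨m, rfl⟩ := Nat.exists_eq_add_of_le hn
  rcases m with _ | l
  · -- n = 2
    simp only [Nat.add_zero, show 2 - 1 = 1 from rfl, Finset.Icc_self,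
      Finset.sum_singleton] at h
    simpa using h
  · -- n = 2 + (l+1) = l + 3
    by_contra hw0
    set n := 2 + (l + 1) with hndef
    have hn1 : n - 1 = l + 2 := by omega
    rw [hn1] at h
    have hkey := key_identity l w
    rw [h, mul_zero] at hkey
    -- so w - w²/2 = T + w^(l+3)/(l+2)
    have heq : w - w ^ 2 / 2 =
        (∑ k ∈ Icc 3 (l + 2), w ^ k / ((k : ℂ) * ((k : ℂ) - 1))) + w ^ (l + 3) / ((l : ℂ) + 2) := by
      linear_combination -hkey
    set a := ‖w‖ with hadef
    have ha0 : 0 < a := by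
      simpa [hadef] using (norm_pos_iff.mpr hw0)
    -- bound the RHS
    have htri : ‖(∑ k ∈ Icc 3 (l + 2), w ^ k / ((k : ℂ) * ((k : ℂ) - 1)))
          + w ^ (l + 3) / ((l : ℂ) + 2)‖
        ≤ (∑ k ∈ Icc 3 (l + 2), a ^ k / ((k : ℝ) * ((k : ℝ) - 1))) + a ^ (l + 3) / ((l : ℝ) + 2) := by
      refine (norm_add_le _ _).trans ?_
      gcongr
      · refine (norm_sum_le _ _).trans_eq ?_
        apply Finset.sum_congr rfl
        intro k hk
        have hk3 : 3 ≤ k := (Finset.mem_Icc.mp hk).1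
        rw [norm_div, norm_pow, norm_mul]
        congr 1
        have h1 : ((k : ℂ) - 1) = ((k : ℝ) - 1 : ℝ) := by push_cast; ring
        have h2 : ((k : ℂ)) = ((k : ℝ) : ℂ) := by push_cast; ring
        rw [h1, h2, Complex.norm_real, Complex.norm_real, Real.norm_eq_abs, Real.norm_eq_abs]
        rw [abs_of_nonneg (by positivity), abs_of_nonneg (by
          have : (3:ℝ) ≤ (k:ℝ) := by exact_mod_cast hk3
          linarith)]
      · rw [norm_div, norm_pow]
        have h2 : ((l : ℂ) + 2) = ((l : ℝ) + 2 : ℝ) := by push_cast; ring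
        rw [h2, Complex.norm_real, Real.norm_eq_abs, abs_of_nonneg (by positivity)]
    have hbd := tail_bound l a (le_of_lt ha0) hw
    have hfinal : ‖w - w ^ 2 / 2‖ ≤ a ^ 3 / 2 := by
      rw [heq]; exact htri.trans hbd
    -- |2w - w²| = a * |2 - w| ≤ a³, so |2 - w| ≤ a²
    have h2w : ‖2 - w‖ ≤ a ^ 2 := by
      have : ‖w‖ * ‖2 - w‖ = 2 * ‖w - w ^ 2 / 2‖ := by
        rw [← norm_mul, show (2:ℝ) = ‖(2:ℂ)‖ by simp, ← norm_mul]
        congr 1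
        ring
      have h3 : a * ‖2 - w‖ ≤ a ^ 3 := by
        rw [← hadef] at this
        rw [this]
        linarith
      calc ‖2 - w‖ = a * ‖2 - w‖ / a := by field_simp
      _ ≤ a ^ 3 / a := by gcongr
      _ = a ^ 2 := by field_simp
    -- normSq computation: forces w = 1
    have hsq : Complex.normSq (2 - w) ≤ a ^ 4 := by
      have := sq_le_sq' (by linarith [norm_nonneg (2 - w)]) h2w
      rw [Complex.sq_norm] at this
      calc Complex.normSq (2 - w) ≤ (a ^ 2) ^ 2 := this
      _ = a ^ 4 := by ring
    have hre : w.re ^ 2 + w.im ^ 2 = a ^ 2 := by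
      rw [hadef, Complex.sq_norm, Complex.normSq_apply]; ring
    have hnsq : Complex.normSq (2 - w) = (2 - w.re) ^ 2 + w.im ^ 2 := by
      rw [Complex.normSq_apply]
      simp [Complex.sub_re, Complex.sub_im]
      ring
    rw [hnsq] at hsq
    have ha1 : a ^ 2 ≤ 1 := by nlinarith
    have hw1 : w = 1 := by
      have hr : w.re = 1 := by nlinarith
      have hi : w.im = 0 := by nlinarith
      exact Complex.ext (by simp [hr]) (by simp [hi])
    -- contradiction: harmonic sum positive
    rw [hw1] at h
    have hcast : ∑ k ∈ Icc 1 (l + 2), (1:ℂ) ^ k / (k : ℂ)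
        = ((∑ k ∈ Icc 1 (l + 2), 1 / (k : ℝ) : ℝ) : ℂ) := by
      push_cast
      simp
    rw [hcast, Complex.ofReal_eq_zero] at h
    have hpos : 0 < ∑ k ∈ Icc 1 (l + 2), 1 / (k : ℝ) := by
      apply Finset.sum_pos
      · intro k hk
        have hk1 : 1 ≤ k := (Finset.mem_Icc.mp hk).1
        have : (0:ℝ) < k := by exact_mod_cast hk1
        positivity
      · exact ⟨1, Finset.mem_Icc.mpr ⟨le_refl 1, by omega⟩⟩
    rw [h] at hpos
    exact lt_irrefl 0 hpos
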